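/- arXiv:2401.18033 — 2 statements merged into one kernel-verified Lean document; each statement's English description precedes it below -/
import Mathlib

section
/- Let I(ε) := ∫_{ε}^{1} (1/y)·(1/√(−ln(y+ε) + ln 2) − 1/√(−ln y + ln 2)) dy. Then I(ε) → 0 as ε → 0⁺. -/
open Real Set Filter

lemma sqrt_diff_bound {a b : ℝ} (ha : 0 < a) (hab : a ≤ b) :
    1/Real.sqrt a - 1/Real.sqrt b ≤ (b - a)/(2 * a * Real.sqrt a) := by
  have hb : 0 < b := ha.trans_le hab
  have hsa : 0 < Real.sqrt a := Real.sqrt_pos.2 ha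
  have hsb : 0 < Real.sqrt b := Real.sqrt_pos.2 hb
  have hsab : Real.sqrt a ≤ Real.sqrt b := Real.sqrt_le_sqrt hab
  have ha2 : Real.sqrt a * Real.sqrt a = a := Real.mul_self_sqrt ha.le
  have hb2 : Real.sqrt b * Real.sqrt b = b := Real.mul_self_sqrt hb.le
  have key : 1/Real.sqrt a - 1/Real.sqrt b
      = (b - a)/((Real.sqrt b + Real.sqrt a) * (Real.sqrt a * Real.sqrt b)) := by
    rw [eq_div_iff (by positivity)]
    field_simp
    linear_combination hb2 - ha2
  rw [key]
  apply div_le_div_of_nonneg_left (by linarith) (by positivity)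
  nlinarith

lemma inv_mul_sqrt_mono {m A : ℝ} (hm : 0 < m) (h : m ≤ A) :
    1/(A * Real.sqrt A) ≤ 1/(m * Real.sqrt m) := by
  apply one_div_le_one_div_of_le (by positivity)
  exact mul_le_mul h (Real.sqrt_le_sqrt h) (Real.sqrt_nonneg m) (by linarith)

lemma integ_aux (c K p q : ℝ) (hp : 0 < p) (hpq : p ≤ q) :
    ∫ y in p..q, c/(2*y^2) * K = c/2 * K * (1/p - 1/q) := by
  have hq : 0 < q := hp.trans_le hpq
  have hfun : (fun y : ℝ => c/(2*y^2) * K) = fun y : ℝ => (c/2*K) * (y ^ (-2 : ℤ)) := by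
    funext y
    rcases eq_or_ne y 0 with h | h
    · norm_num [h]
    · rw [zpow_neg]
      field_simp
  rw [hfun, intervalIntegral.integral_const_mul, integral_zpow]
  · norm_num
    field_simp
    left
    ring
  · refine Or.inr ⟨by norm_num, ?_⟩
    rw [Set.uIcc_of_le hpq]
    rintro ⟨h1, h2⟩
    linarith

lemma ptwise {ε y : ℝ} (hε : 0 < ε) (hy : ε ≤ y) (hy1 : y ≤ 1) (hε4 : ε ≤ 1/4) :
    (1 / y) * (1 / Real.sqrt (-Real.log (y + ε) + Real.log 2)
          - 1 / Real.sqrt (-Real.log y + Real.log 2))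
      ≤ ε/(2*y^2) * (1/((-Real.log (y + ε) + Real.log 2)
          * Real.sqrt (-Real.log (y + ε) + Real.log 2))) := by
  have hy0 : 0 < y := hε.trans_le hy
  have hyε : 0 < y + ε := by linarith
  have hA : 0 < -Real.log (y + ε) + Real.log 2 := by
    have : Real.log (y + ε) < Real.log 2 := Real.log_lt_log hyε (by linarith)
    linarith
  set A := -Real.log (y + ε) + Real.log 2 with hAdef
  set B := -Real.log y + Real.log 2 with hBdef
  have hAB : A ≤ B := by
    have : Real.log y ≤ Real.log (y + ε) := Real.log_le_log hy0 (by linarith)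
    simp only [hAdef, hBdef]; linarith
  have hdiff : B - A ≤ ε / y := by
    have h1 : Real.log (y + ε) - Real.log y = Real.log ((y + ε)/y) := by
      rw [Real.log_div (by positivity) (by positivity)]
    have h2 : Real.log ((y + ε)/y) ≤ (y + ε)/y - 1 :=
      Real.log_le_sub_one_of_pos (by positivity)
    have h3 : (y + ε)/y - 1 = ε / y := by field_simp; ring
    simp only [hBdef, hAdef]
    linarith
  have step1 : 1/Real.sqrt A - 1/Real.sqrt B ≤ (B - A)/(2 * A * Real.sqrt A) :=
    sqrt_diff_bound hA hAB
  have step2 : (B - A)/(2 * A * Real.sqrt A) ≤ (ε/y)/(2 * A * Real.sqrt A) := by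
    exact (div_le_div_iff_of_pos_right (by positivity)).2 hdiff
  have hne : Real.sqrt A ≠ 0 := by positivity
  calc (1/y) * (1/Real.sqrt A - 1/Real.sqrt B)
      ≤ (1/y) * ((ε/y)/(2 * A * Real.sqrt A)) := by
        apply mul_le_mul_of_nonneg_left (step1.trans step2) (by positivity)
    _ = ε/(2*y^2) * (1/(A * Real.sqrt A)) := by
        have h : Real.sqrt A ≠ 0 := by positivity
        field_simp

lemma contF {ε : ℝ} (hε : 0 < ε) (hε4 : ε ≤ 1/4) :
    ContinuousOn (fun y : ℝ => (1 / y) * (1 / Real.sqrt (-Real.log (y + ε) + Real.log 2)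
          - 1 / Real.sqrt (-Real.log y + Real.log 2))) (Set.Icc ε 1) := by
  have hy0 : ∀ y ∈ Set.Icc ε 1, y ≠ 0 := fun y hy => ne_of_gt (hε.trans_le hy.1)
  have hargA : ∀ y ∈ Set.Icc ε 1, 0 < -Real.log (y + ε) + Real.log 2 := by
    intro y hy
    have h1 : 0 < y + ε := by have := hy.1; linarith
    have : Real.log (y + ε) < Real.log 2 := Real.log_lt_log h1 (by have := hy.2; linarith)
    linarith
  have hargB : ∀ y ∈ Set.Icc ε 1, 0 < -Real.log y + Real.log 2 := by
    intro y hy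
    have h1 : 0 < y := hε.trans_le hy.1
    have : Real.log y < Real.log 2 := Real.log_lt_log h1 (by have := hy.2; linarith)
    linarith
  have hA : ContinuousOn (fun y : ℝ => -Real.log (y + ε) + Real.log 2) (Set.Icc ε 1) := by
    apply ContinuousOn.add _ continuousOn_const
    apply ContinuousOn.neg
    apply ContinuousOn.log (by fun_prop)
    intro y hy
    have := hy.1
    exact ne_of_gt (by linarith)
  have hB : ContinuousOn (fun y : ℝ => -Real.log y + Real.log 2) (Set.Icc ε 1) := by
    apply ContinuousOn.add _ continuousOn_const
    apply ContinuousOn.neg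
    exact Real.continuousOn_log.mono (fun y hy => hy0 y hy)
  apply ContinuousOn.mul
  · exact continuousOn_const.div continuousOn_id hy0
  · apply ContinuousOn.sub
    · apply continuousOn_const.div (Real.continuous_sqrt.comp_continuousOn hA)
      intro y hy
      exact ne_of_gt (Real.sqrt_pos.2 (hargA y hy))
    · apply continuousOn_const.div (Real.continuous_sqrt.comp_continuousOn hB)
      intro y hy
      exact ne_of_gt (Real.sqrt_pos.2 (hargB y hy))

lemma phi_tendsto :
    Tendsto (fun ε : ℝ => 1/2 * (1/((-Real.log ε/2) * Real.sqrt (-Real.log ε/2)))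
        + Real.sqrt ε/2 * (1/((Real.log 2 - Real.log (1+ε))
            * Real.sqrt (Real.log 2 - Real.log (1+ε)))))
      (nhdsWithin 0 (Set.Ioi 0)) (nhds 0) := by
  have t1 : Tendsto (fun ε : ℝ => 1/2 * (1/((-Real.log ε/2) * Real.sqrt (-Real.log ε/2))))
      (nhdsWithin 0 (Set.Ioi 0)) (nhds 0) := by
    have hm : Tendsto (fun ε : ℝ => -Real.log ε/2) (nhdsWithin 0 (Set.Ioi 0)) atTop := by
      apply Tendsto.atTop_div_const (by norm_num : (0:ℝ) < 2)
      exact tendsto_neg_atBot_atTop.comp Real.tendsto_log_nhdsGT_zero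
    have sqrt_top : Tendsto Real.sqrt atTop atTop := by
      apply tendsto_atTop_atTop.2
      intro b
      refine ⟨(max b 0)^2, fun a ha => le_trans (le_max_left b 0) ?_⟩
      rw [← Real.sqrt_sq (le_max_right b 0)]
      exact Real.sqrt_le_sqrt ha
    have hms : Tendsto (fun ε : ℝ => (-Real.log ε/2) * Real.sqrt (-Real.log ε/2))
        (nhdsWithin 0 (Set.Ioi 0)) atTop :=
      hm.atTop_mul_atTop₀ (sqrt_top.comp hm)
    have h2 := (tendsto_inv_atTop_zero.comp hms).const_mul (1/2 : ℝ)
    simp only [Function.comp_def, mul_zero] at h2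
    simpa [one_div] using h2
  have t2 : Tendsto (fun ε : ℝ => Real.sqrt ε/2 * (1/((Real.log 2 - Real.log (1+ε))
        * Real.sqrt (Real.log 2 - Real.log (1+ε)))))
      (nhdsWithin 0 (Set.Ioi 0)) (nhds 0) := by
    have hc : Tendsto (fun ε : ℝ => Real.log 2 - Real.log (1+ε))
        (nhdsWithin 0 (Set.Ioi 0)) (nhds (Real.log 2)) := by
      have h1 : Tendsto (fun ε : ℝ => Real.log (1+ε)) (nhdsWithin 0 (Set.Ioi 0)) (nhds 0) := by
        have : ContinuousAt (fun ε : ℝ => Real.log (1+ε)) 0 :=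
          ContinuousAt.log (continuousAt_const.add continuousAt_id) (by norm_num)
        simpa using this.continuousWithinAt.tendsto
      simpa using (tendsto_const_nhds.sub h1 :
        Tendsto (fun ε : ℝ => Real.log 2 - Real.log (1+ε)) _ (nhds (Real.log 2 - 0)))
    have hl2 : 0 < Real.log 2 := Real.log_pos (by norm_num)
    have hinv : Tendsto (fun ε : ℝ => 1/((Real.log 2 - Real.log (1+ε))
        * Real.sqrt (Real.log 2 - Real.log (1+ε)))) (nhdsWithin 0 (Set.Ioi 0))
        (nhds (1/(Real.log 2 * Real.sqrt (Real.log 2)))) := by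
      apply Tendsto.div tendsto_const_nhds
      · exact hc.mul ((Real.continuous_sqrt.tendsto _).comp hc)
      · positivity
    have hs : Tendsto (fun ε : ℝ => Real.sqrt ε/2) (nhdsWithin 0 (Set.Ioi 0)) (nhds 0) := by
      have : Tendsto Real.sqrt (nhdsWithin 0 (Set.Ioi 0)) (nhds 0) := by
        simpa using (Real.continuous_sqrt.tendsto 0).mono_left nhdsWithin_le_nhds
      simpa using this.div_const 2
    simpa using hs.mul hinv
  simpa using t1.add t2

open Real in
theorem stmt_6 :
    Filter.Tendsto
      (fun ε : ℝ => ∫ y in ε..1,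
        (1 / y) * (1 / Real.sqrt (-Real.log (y + ε) + Real.log 2)
          - 1 / Real.sqrt (-Real.log y + Real.log 2)))
      (nhdsWithin 0 (Set.Ioi 0)) (nhds 0) := by
  have hmem : Set.Ioo (0:ℝ) (1/4) ∈ nhdsWithin (0:ℝ) (Set.Ioi 0) :=
    Ioo_mem_nhdsGT_of_mem ⟨le_refl 0, by norm_num⟩
  apply squeeze_zero' (g := fun ε : ℝ =>
      1/2 * (1/((-Real.log ε/2) * Real.sqrt (-Real.log ε/2)))
        + Real.sqrt ε/2 * (1/((Real.log 2 - Real.log (1+ε))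
            * Real.sqrt (Real.log 2 - Real.log (1+ε)))))
  · -- nonnegativity
    filter_upwards [hmem] with ε hε
    obtain ⟨hε0, hε4⟩ := hε
    apply intervalIntegral.integral_nonneg (by linarith)
    intro y hy
    have hy0 : 0 < y := lt_of_lt_of_le hε0 hy.1
    have hA : 0 < -Real.log (y + ε) + Real.log 2 := by
      have : Real.log (y + ε) < Real.log 2 := Real.log_lt_log (by linarith)
        (by have := hy.2; linarith)
      linarith
    have hAB : -Real.log (y + ε) + Real.log 2 ≤ -Real.log y + Real.log 2 := by
      have : Real.log y ≤ Real.log (y + ε) := Real.log_le_log hy0 (by linarith)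
      linarith
    have : 1/Real.sqrt (-Real.log y + Real.log 2)
        ≤ 1/Real.sqrt (-Real.log (y + ε) + Real.log 2) :=
      one_div_le_one_div_of_le (Real.sqrt_pos.2 hA) (Real.sqrt_le_sqrt hAB)
    have h2 : 0 ≤ 1/y := by positivity
    nlinarith
  · -- upper bound
    filter_upwards [hmem] with ε hε
    obtain ⟨hε0, hε4⟩ := hε
    set s := Real.sqrt ε with hsdef
    have hs0 : 0 < s := Real.sqrt_pos.2 hε0
    have hss : s * s = ε := Real.mul_self_sqrt hε0.le
    have hs1 : s ≤ 1 := by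
      rw [hsdef]
      exact Real.sqrt_le_one.2 (by linarith)
    have hεs : ε ≤ s := by nlinarith
    set m := -Real.log ε/2 with hmdef
    set c := Real.log 2 - Real.log (1+ε) with hcdef
    have hm : 0 < m := by
      have : Real.log ε < 0 := Real.log_neg hε0 (by linarith)
      rw [hmdef]; linarith
    have hc : 0 < c := by
      have : Real.log (1+ε) < Real.log 2 := Real.log_lt_log (by linarith) (by linarith)
      rw [hcdef]; linarith
    set F := fun y : ℝ => (1 / y) * (1 / Real.sqrt (-Real.log (y + ε) + Real.log 2)
        - 1 / Real.sqrt (-Real.log y + Real.log 2)) with hFdef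
    have hcont : ContinuousOn F (Set.Icc ε 1) := contF hε0 (by linarith)
    have int1 : IntervalIntegrable F MeasureTheory.volume ε s := by
      apply (hcont.mono _).intervalIntegrable
      rw [Set.uIcc_of_le hεs]
      exact Set.Icc_subset_Icc (le_refl _) hs1
    have int2 : IntervalIntegrable F MeasureTheory.volume s 1 := by
      apply (hcont.mono _).intervalIntegrable
      rw [Set.uIcc_of_le hs1]
      exact Set.Icc_subset_Icc hεs (le_refl _)
    have hsplit : (∫ y in ε..(1:ℝ), F y) = (∫ y in ε..s, F y) + ∫ y in s..(1:ℝ), F y :=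
      (intervalIntegral.integral_add_adjacent_intervals int1 int2).symm
    -- bound functions
    have hcont1 : ContinuousOn (fun y : ℝ => ε/(2*y^2) * (1/(m * Real.sqrt m)))
        (Set.uIcc ε s) := by
      apply ContinuousOn.mul _ continuousOn_const
      apply continuousOn_const.div (by fun_prop)
      intro y hy
      rw [Set.uIcc_of_le hεs] at hy
      have : 0 < y := lt_of_lt_of_le hε0 hy.1
      positivity
    have hcont2 : ContinuousOn (fun y : ℝ => ε/(2*y^2) * (1/(c * Real.sqrt c)))
        (Set.uIcc s 1) := by
      apply ContinuousOn.mul _ continuousOn_const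
      apply continuousOn_const.div (by fun_prop)
      intro y hy
      rw [Set.uIcc_of_le hs1] at hy
      have : 0 < y := lt_of_lt_of_le hs0 hy.1
      positivity
    -- pointwise bounds on each piece
    have bound1 : ∀ y ∈ Set.Icc ε s, F y ≤ ε/(2*y^2) * (1/(m * Real.sqrt m)) := by
      intro y hy
      have hy0 : 0 < y := lt_of_lt_of_le hε0 hy.1
      have hy1 : y ≤ 1 := hy.2.trans hs1
      have hmA : m ≤ -Real.log (y + ε) + Real.log 2 := by
        have h1 : Real.log (y + ε) ≤ Real.log (2*y) :=
          Real.log_le_log (by linarith) (by have := hy.1; linarith)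
        have h2 : Real.log (2*y) = Real.log 2 + Real.log y :=
          Real.log_mul (by norm_num) (ne_of_gt hy0)
        have h3 : Real.log y ≤ Real.log s := Real.log_le_log hy0 hy.2
        have h4 : Real.log s = Real.log ε / 2 := Real.log_sqrt hε0.le
        rw [hmdef]
        linarith
      calc F y ≤ ε/(2*y^2) * (1/((-Real.log (y + ε) + Real.log 2)
            * Real.sqrt (-Real.log (y + ε) + Real.log 2))) :=
            ptwise hε0 hy.1 hy1 (by linarith)
        _ ≤ ε/(2*y^2) * (1/(m * Real.sqrt m)) := by
            apply mul_le_mul_of_nonneg_left (inv_mul_sqrt_mono hm hmA) (by positivity)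
    have bound2 : ∀ y ∈ Set.Icc s 1, F y ≤ ε/(2*y^2) * (1/(c * Real.sqrt c)) := by
      intro y hy
      have hy0 : 0 < y := lt_of_lt_of_le hs0 hy.1
      have hyε : ε ≤ y := hεs.trans hy.1
      have hcA : c ≤ -Real.log (y + ε) + Real.log 2 := by
        have h1 : Real.log (y + ε) ≤ Real.log (1 + ε) :=
          Real.log_le_log (by linarith) (by have := hy.2; linarith)
        rw [hcdef]
        linarith
      calc F y ≤ ε/(2*y^2) * (1/((-Real.log (y + ε) + Real.log 2)
            * Real.sqrt (-Real.log (y + ε) + Real.log 2))) :=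
            ptwise hε0 hyε hy.2 (by linarith)
        _ ≤ ε/(2*y^2) * (1/(c * Real.sqrt c)) := by
            apply mul_le_mul_of_nonneg_left (inv_mul_sqrt_mono hc hcA) (by positivity)
    have mono1 : (∫ y in ε..s, F y) ≤ ∫ y in ε..s, ε/(2*y^2) * (1/(m * Real.sqrt m)) :=
      intervalIntegral.integral_mono_on hεs int1 (hcont1.intervalIntegrable) bound1
    have mono2 : (∫ y in s..(1:ℝ), F y) ≤ ∫ y in s..(1:ℝ), ε/(2*y^2) * (1/(c * Real.sqrt c)) :=
      intervalIntegral.integral_mono_on hs1 int2 (hcont2.intervalIntegrable) bound2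
    have val1 : (∫ y in ε..s, ε/(2*y^2) * (1/(m * Real.sqrt m)))
        ≤ 1/2 * (1/(m * Real.sqrt m)) := by
      rw [integ_aux ε (1/(m * Real.sqrt m)) ε s hε0 hεs]
      have hK : 0 ≤ 1/(m * Real.sqrt m) := by positivity
      have h1 : ε/2 * (1/ε - 1/s) ≤ 1/2 := by
        have h2 : (0:ℝ) < 1/s := by positivity
        have h3 : ε/2 * (1/ε) = 1/2 := by
          field_simp
        nlinarith
      nlinarith [mul_le_mul_of_nonneg_right h1 hK]
    have val2 : (∫ y in s..(1:ℝ), ε/(2*y^2) * (1/(c * Real.sqrt c)))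
        ≤ Real.sqrt ε/2 * (1/(c * Real.sqrt c)) := by
      rw [integ_aux ε (1/(c * Real.sqrt c)) s 1 hs0 hs1]
      have hK : 0 ≤ 1/(c * Real.sqrt c) := by positivity
      have h1 : ε/2 * (1/s - 1/1) ≤ s/2 := by
        have h3 : ε/2 * (1/s) = s/2 := by
          field_simp
          nlinarith
        nlinarith
      rw [hsdef] at h1 ⊢
      nlinarith [mul_le_mul_of_nonneg_right h1 hK]
    calc (∫ y in ε..(1:ℝ), F y) = (∫ y in ε..s, F y) + ∫ y in s..(1:ℝ), F y := hsplit
      _ ≤ 1/2 * (1/(m * Real.sqrt m)) + Real.sqrt ε/2 * (1/(c * Real.sqrt c)) := by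
          have := (mono1.trans val1)
          have := (mono2.trans val2)
          linarith
      _ = 1/2 * (1/((-Real.log ε/2) * Real.sqrt (-Real.log ε/2)))
          + Real.sqrt ε/2 * (1/((Real.log 2 - Real.log (1+ε))
              * Real.sqrt (Real.log 2 - Real.log (1+ε)))) := by rw [hmdef, hcdef]
  · exact phi_tendsto
end

section
/- Let x ∈ ℝ^N with |x| ≥ 1, x* = x/|x|², P = 4x/(4|x|² − 1), ρ = 2/(4|x|² − 1), and σ = (2|x| − 1)/(|x|(4|x|² − 1)). Then B_σ(x*) ⊆ B_ρ(P), and 0 < σ ≤ ρ < 1. -/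
theorem stmt_14 (N : ℕ) (hN : 1 ≤ N) (x : EuclideanSpace ℝ (Fin N)) (hx : 1 ≤ ‖x‖) :
    Metric.ball ((‖x‖ ^ 2)⁻¹ • x) ((2 * ‖x‖ - 1) / (‖x‖ * (4 * ‖x‖ ^ 2 - 1))) ⊆
        Metric.ball (((4 : ℝ) / (4 * ‖x‖ ^ 2 - 1)) • x) (2 / (4 * ‖x‖ ^ 2 - 1)) ∧
      0 < (2 * ‖x‖ - 1) / (‖x‖ * (4 * ‖x‖ ^ 2 - 1)) ∧
      (2 * ‖x‖ - 1) / (‖x‖ * (4 * ‖x‖ ^ 2 - 1)) ≤ 2 / (4 * ‖x‖ ^ 2 - 1) ∧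
      2 / (4 * ‖x‖ ^ 2 - 1) < 1 := by
  have hr : (1:ℝ) ≤ ‖x‖ := hx
  have hr0 : (0:ℝ) < ‖x‖ := by linarith
  have h4 : (3:ℝ) ≤ 4 * ‖x‖ ^ 2 - 1 := by nlinarith
  have h40 : (0:ℝ) < 4 * ‖x‖ ^ 2 - 1 := by linarith
  have hdist : dist ((‖x‖ ^ 2)⁻¹ • x) (((4 : ℝ) / (4 * ‖x‖ ^ 2 - 1)) • x)
      = 1 / (‖x‖ * (4 * ‖x‖ ^ 2 - 1)) := by
    rw [dist_eq_norm, ← sub_smul, norm_smul, Real.norm_eq_abs]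
    have h1 : (‖x‖ ^ 2)⁻¹ - 4 / (4 * ‖x‖ ^ 2 - 1)
        = -(1 / (‖x‖ ^ 2 * (4 * ‖x‖ ^ 2 - 1))) := by
      have hne : 4 * ‖x‖ ^ 2 - 1 ≠ 0 := h40.ne'
      have hr2 : ‖x‖ ^ 2 ≠ 0 := by positivity
      rw [inv_eq_one_div, div_sub_div _ _ hr2 hne, ← neg_div]
      congr 1
      ring
    rw [h1, abs_neg, abs_of_pos (by positivity)]
    field_simp
  have hsum : (2 * ‖x‖ - 1) / (‖x‖ * (4 * ‖x‖ ^ 2 - 1)) + 1 / (‖x‖ * (4 * ‖x‖ ^ 2 - 1))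
      = 2 / (4 * ‖x‖ ^ 2 - 1) := by
    field_simp
    ring
  refine ⟨?_, ?_, ?_, ?_⟩
  · apply Metric.ball_subset_ball'
    rw [hdist, hsum]
  · apply div_pos (by linarith) (by positivity)
  · have h1 : (0:ℝ) < 1 / (‖x‖ * (4 * ‖x‖ ^ 2 - 1)) := by positivity
    linarith
  · rw [div_lt_one h40]
    nlinarith
end
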